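/- For every natural number m and every three times differentiable function f on I, the intertwining relation (A_m (H_m f))(s) = (H_{m+1} (A_m f))(s) holds for all s in I. -/

import Mathlib

noncomputable section IntertwineAux

def sqp (a b c t : ℝ) : ℝ := Real.sqrt (a*t^2+b*t+c)
def sqp1 (a b c t : ℝ) : ℝ := (2*a*t+b) / (2 * sqp a b c t)
def sqp2 (a b c t : ℝ) : ℝ :=
  (2*a * (2*sqp a b c t) - (2*a*t+b)*(2*sqp1 a b c t)) / (2*sqp a b c t)^2
def sqp3 (a b c t : ℝ) : ℝ :=
  ((2*a*(2*sqp1 a b c t) - (2*a*(2*sqp1 a b c t) + (2*a*t+b)*(2*sqp2 a b c t))) * (2*sqp a b c t)^2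
    - (2*a*(2*sqp a b c t) - (2*a*t+b)*(2*sqp1 a b c t)) * (2*(2*sqp a b c t)*(2*sqp1 a b c t)))
   / ((2*sqp a b c t)^2)^2

theorem poly_hasDeriv (a b c t : ℝ) : HasDerivAt (fun u => a*u^2+b*u+c) (2*a*t+b) t := by
  have h := (((hasDerivAt_pow 2 t).const_mul a).add ((hasDerivAt_id t).const_mul b)).add_const c
  refine h.congr_deriv ?_
  push_cast
  ring

theorem lin_hasDeriv (d e t : ℝ) : HasDerivAt (fun u => d*u+e) d t := by
  have h := ((hasDerivAt_id t).const_mul d).add_const e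
  simpa using h

theorem q_hasDeriv (a b t : ℝ) : HasDerivAt (fun u => 2*a*u+b) (2*a) t := by
  have h := ((hasDerivAt_id t).const_mul (2*a)).add_const b
  simpa using h

theorem sqp_pos {a b c t : ℝ} (h : 0 < a*t^2+b*t+c) : 0 < sqp a b c t :=
  Real.sqrt_pos.mpr h

theorem sqp_hasDeriv {a b c t : ℝ} (h : 0 < a*t^2+b*t+c) :
    HasDerivAt (fun u => Real.sqrt (a*u^2+b*u+c)) (sqp1 a b c t) t :=
  (poly_hasDeriv a b c t).sqrt h.ne'

theorem sqp1_hasDeriv {a b c t : ℝ} (h : 0 < a*t^2+b*t+c) :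
    HasDerivAt (sqp1 a b c) (sqp2 a b c t) t := by
  have hne : (2:ℝ) * sqp a b c t ≠ 0 := by
    have := sqp_pos h; positivity
  exact (q_hasDeriv a b t).div ((sqp_hasDeriv h).const_mul 2) hne

theorem sqp2_hasDeriv {a b c t : ℝ} (h : 0 < a*t^2+b*t+c) :
    HasDerivAt (sqp2 a b c) (sqp3 a b c t) t := by
  have hkpos := sqp_pos h
  have hne : ((2:ℝ) * sqp a b c t)^2 ≠ 0 := by positivity
  have hn : HasDerivAt (fun u => 2*a * (2*sqp a b c u) - (2*a*u+b)*(2*sqp1 a b c u))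
      (2*a*(2*sqp1 a b c t) - (2*a*(2*sqp1 a b c t) + (2*a*t+b)*(2*sqp2 a b c t))) t :=
    (((sqp_hasDeriv h).const_mul 2).const_mul (2*a)).sub
      ((q_hasDeriv a b t).mul ((sqp1_hasDeriv h).const_mul 2))
  have hd : HasDerivAt (fun u => (2*sqp a b c u)^2) (2*(2*sqp a b c t)*(2*sqp1 a b c t)) t := by
    have := ((sqp_hasDeriv h).const_mul 2).pow 2
    refine this.congr_deriv ?_
    simp only [sqp]
    norm_num
  exact hn.div hd hne

end IntertwineAux

set_option maxHeartbeats 4000000 in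
/-- For every `m : ℕ` and every three times differentiable
function `f` on the nonempty open interval `I` (on which `σ > 0`), the
intertwining relation `A_m (H_m f) = H_{m+1} (A_m f)` holds on `I`, where
`A_m f = κ f' - m κ' f` and
`H_m f = -σ f'' - τ f' + [m(m-2)σ'²/(4σ) + mτσ'/(2σ) - m(m-2)σ''/2 - mτ'] f`. -/
theorem intertwining_Am_Hm
    (a b c d e : ℝ) (σ τ : ℝ → ℝ)
    (hσ : ∀ s, σ s = a * s ^ 2 + b * s + c)
    (hτ : ∀ s, τ s = d * s + e)
    (I : Set ℝ) (hI : IsOpen I) (hIne : I.Nonempty) (hIconn : I.OrdConnected)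
    (hσpos : ∀ s ∈ I, 0 < σ s)
    (κ : ℝ → ℝ) (hκ : ∀ s, κ s = Real.sqrt (σ s))
    (m : ℕ) (f : ℝ → ℝ) (hf : ContDiffOn ℝ 3 f I)
    (Hf : ℝ → ℝ)
    (hHf : ∀ s, Hf s = -σ s * deriv (deriv f) s - τ s * deriv f s
        + ((m : ℝ) * ((m : ℝ) - 2) * (2 * a * s + b) ^ 2 / (4 * σ s)
            + (m : ℝ) * τ s * (2 * a * s + b) / (2 * σ s)
            - (m : ℝ) * ((m : ℝ) - 2) * (2 * a) / 2
            - (m : ℝ) * d) * f s)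
    (Af : ℝ → ℝ) (hAf : ∀ s, Af s = κ s * deriv f s - (m : ℝ) * deriv κ s * f s) :
    ∀ s ∈ I,
      κ s * deriv Hf s - (m : ℝ) * deriv κ s * Hf s
      = -σ s * deriv (deriv Af) s - τ s * deriv Af s
          + (((m : ℝ) + 1) * (((m : ℝ) + 1) - 2) * (2 * a * s + b) ^ 2 / (4 * σ s)
              + ((m : ℝ) + 1) * τ s * (2 * a * s + b) / (2 * σ s)
              - ((m : ℝ) + 1) * (((m : ℝ) + 1) - 2) * (2 * a) / 2
              - ((m : ℝ) + 1) * d) * Af s := by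
  obtain rfl : σ = fun u => a*u^2+b*u+c := funext hσ
  obtain rfl : τ = fun u => d*u+e := funext hτ
  obtain rfl : κ = fun u => Real.sqrt (a*u^2+b*u+c) := funext fun u => hκ u
  beta_reduce at hσpos hHf hAf ⊢
  intro s hs
  have hps : 0 < a*s^2+b*s+c := hσpos s hs
  have hfd : ∀ t ∈ I, HasDerivAt f (deriv f t) t := fun t ht =>
    (((hf.differentiableOn (by norm_num)) t ht).differentiableAt (hI.mem_nhds ht)).hasDerivAt
  have hfC1 : ContDiffOn ℝ 2 (deriv f) I := hf.deriv_of_isOpen hI (by norm_num)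
  have hf1d : ∀ t ∈ I, HasDerivAt (deriv f) (deriv (deriv f) t) t := fun t ht =>
    (((hfC1.differentiableOn (by norm_num)) t ht).differentiableAt (hI.mem_nhds ht)).hasDerivAt
  have hfC2 : ContDiffOn ℝ 1 (deriv (deriv f)) I := hfC1.deriv_of_isOpen hI (by norm_num)
  have hf2d : ∀ t ∈ I, HasDerivAt (deriv (deriv f)) (deriv (deriv (deriv f)) t) t := fun t ht =>
    (((hfC2.differentiableOn (by norm_num)) t ht).differentiableAt (hI.mem_nhds ht)).hasDerivAt
  have hkd : ∀ t ∈ I, HasDerivAt (fun u => Real.sqrt (a*u^2+b*u+c)) (sqp1 a b c t) t :=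
    fun t ht => sqp_hasDeriv (hσpos t ht)
  -- Af agrees with an explicit function on I
  have hAg : ∀ t ∈ I, Af t
      = Real.sqrt (a*t^2+b*t+c) * deriv f t - (m:ℝ) * sqp1 a b c t * f t := by
    intro t ht
    rw [hAf t, (hkd t ht).deriv]
  have hgd : ∀ t ∈ I, HasDerivAt
      (fun u => Real.sqrt (a*u^2+b*u+c) * deriv f u - (m:ℝ) * sqp1 a b c u * f u)
      (sqp1 a b c t * deriv f t + Real.sqrt (a*t^2+b*t+c) * deriv (deriv f) t
        - ((m:ℝ) * sqp2 a b c t * f t + (m:ℝ) * sqp1 a b c t * deriv f t)) t :=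
    fun t ht => ((hkd t ht).mul (hf1d t ht)).sub
      ((((sqp1_hasDeriv (hσpos t ht)).const_mul (m:ℝ)).mul (hfd t ht)))
  have hdAf : ∀ t ∈ I, deriv Af t
      = sqp1 a b c t * deriv f t + Real.sqrt (a*t^2+b*t+c) * deriv (deriv f) t
        - ((m:ℝ) * sqp2 a b c t * f t + (m:ℝ) * sqp1 a b c t * deriv f t) := by
    intro t ht
    have hev : Af =ᶠ[nhds t]
        fun u => Real.sqrt (a*u^2+b*u+c) * deriv f u - (m:ℝ) * sqp1 a b c u * f u := by
      filter_upwards [hI.mem_nhds ht] with u hu using hAg u hu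
    exact hev.deriv_eq.trans (hgd t ht).deriv
  have hev1 : deriv Af =ᶠ[nhds s]
      fun t => sqp1 a b c t * deriv f t + Real.sqrt (a*t^2+b*t+c) * deriv (deriv f) t
        - ((m:ℝ) * sqp2 a b c t * f t + (m:ℝ) * sqp1 a b c t * deriv f t) := by
    filter_upwards [hI.mem_nhds hs] with t ht using hdAf t ht
  have comb2 := (((sqp1_hasDeriv hps).mul (hf1d s hs)).add ((hkd s hs).mul (hf2d s hs))).sub
      ((((sqp2_hasDeriv hps).const_mul (m:ℝ)).mul (hfd s hs)).add
        (((sqp1_hasDeriv hps).const_mul (m:ℝ)).mul (hf1d s hs)))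
  have hdd : deriv (deriv Af) s = _ := hev1.deriv_eq.trans comb2.deriv
  -- Hf derivative
  have hHfun : Hf = fun t => -(a*t^2+b*t+c) * deriv (deriv f) t - (d*t+e) * deriv f t
      + ((m:ℝ)*((m:ℝ)-2)*(2*a*t+b)^2/(4*(a*t^2+b*t+c))
          + (m:ℝ)*(d*t+e)*(2*a*t+b)/(2*(a*t^2+b*t+c))
          - (m:ℝ)*((m:ℝ)-2)*(2*a)/2 - (m:ℝ)*d) * f t := funext fun t => hHf t
  have hRd := ((((((q_hasDeriv a b s).pow 2).const_mul ((m:ℝ)*((m:ℝ)-2))).div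
        ((poly_hasDeriv a b c s).const_mul 4) (mul_pos (by norm_num) hps).ne').add
      ((((lin_hasDeriv d e s).const_mul (m:ℝ)).mul (q_hasDeriv a b s)).div
        ((poly_hasDeriv a b c s).const_mul 2) (mul_pos (by norm_num) hps).ne')).sub_const
      ((m:ℝ)*((m:ℝ)-2)*(2*a)/2)).sub_const ((m:ℝ)*d)
  have hHcomb := (((poly_hasDeriv a b c s).neg.mul (hf2d s hs)).sub
      ((lin_hasDeriv d e s).mul (hf1d s hs))).add (hRd.mul (hfd s hs))
  rw [hHfun]
  beta_reduce
  simp only [Pi.mul_def, Pi.neg_def, Pi.sub_def, Pi.add_def, Pi.div_def, Pi.pow_def] at hHcomb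
  rw [hHcomb.deriv, hdd, hdAf s hs, hAf s, (hkd s hs).deriv]
  simp only [sqp, sqp1, sqp2, sqp3]
  have hxpos : 0 < Real.sqrt (a*s^2+b*s+c) := Real.sqrt_pos.mpr hps
  set x := Real.sqrt (a*s^2+b*s+c) with hx
  have hx2 : x^2 = a*s^2+b*s+c := Real.sq_sqrt hps.le
  have hxne : x ≠ 0 := hxpos.ne'
  rw [← hx2]
  push_cast
  field_simp
  ring
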